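/- Let (M, d) be a complete separable metric space and μ a Borel probability measure on M. Then for any ε₁ > 0 there exist ε₂ > 0 and a finite collection of disjoint measurable subsets S₁, …, S_M of M such that: (1) μ(⋃ᵢ Sᵢ) > 1 − ε₁; (2) for each i, sup{d(x,y) : x,y ∈ Sᵢ} < ε₁; and (3) for i ≠ j and x ∈ Sᵢ, y ∈ Sⱼ, d(x,y) > ε₂. -/

import Mathlib

open MeasureTheory

/-- In a complete separable metric space with a Borel probability
measure, for any ε₁ > 0 there are finitely many disjoint measurable sets of
diameter < ε₁ covering all but ε₁ of the mass, which are pairwise ε₂-separated. -/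
theorem stmt_0 {M : Type*} [MetricSpace M] [CompleteSpace M]
    [TopologicalSpace.SeparableSpace M] [MeasurableSpace M] [BorelSpace M]
    (μ : Measure M) [IsProbabilityMeasure μ] :
    ∀ ε₁ : ℝ, 0 < ε₁ → ∃ ε₂ : ℝ, 0 < ε₂ ∧ ∃ (n : ℕ) (S : Fin n → Set M),
      (∀ i, MeasurableSet (S i)) ∧
      Pairwise (Function.onFun Disjoint S) ∧
      1 - ε₁ < (μ (⋃ i, S i)).toReal ∧
      (∀ i, ∀ x ∈ S i, ∀ y ∈ S i, dist x y < ε₁) ∧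
      (∀ i j, i ≠ j → ∀ x ∈ S i, ∀ y ∈ S j, ε₂ < dist x y) := by
  intro ε₁ hε₁
  haveI : Nonempty M := by
    by_contra h
    rw [not_nonempty_iff] at h
    have h1 : (1 : ENNReal) = 0 := by
      rw [← measure_univ (μ := μ), Set.univ_eq_empty_iff.mpr h, measure_empty]
    exact one_ne_zero h1
  set x : ℕ → M := TopologicalSpace.denseSeq M with hx
  have hdense : DenseRange x := TopologicalSpace.denseRange_denseSeq M
  -- bad radii
  have hbad : (⋃ k : ℕ, {t : ℝ | 0 < μ {y | dist y (x k) = t}}).Countable := by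
    refine Set.countable_iUnion fun k => ?_
    exact Measure.countable_meas_level_set_pos
      ((Continuous.dist continuous_id continuous_const).measurable)
  obtain ⟨r, hrIoo, hrgood⟩ :
      ∃ r ∈ Set.Ioo (0:ℝ) (ε₁/2), r ∉ ⋃ k : ℕ, {t : ℝ | 0 < μ {y | dist y (x k) = t}} := by
    by_contra h
    push_neg at h
    have hsub : Set.Ioo (0:ℝ) (ε₁/2) ⊆ _ := h
    have hc : (Set.Ioo (0:ℝ) (ε₁/2)).Countable := hbad.mono hsub
    have : (Cardinal.mk (Set.Ioo (0:ℝ) (ε₁/2))) ≤ Cardinal.aleph0 :=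
      Cardinal.mk_le_aleph0_iff.mpr hc.to_subtype
    rw [Cardinal.mk_Ioo_real (by linarith)] at this
    exact absurd this (not_le.mpr Cardinal.aleph0_lt_continuum)
  obtain ⟨hr0, hr2⟩ := hrIoo
  have hsphere : ∀ k : ℕ, μ {y | dist y (x k) = r} = 0 := by
    intro k
    by_contra h
    exact hrgood (Set.mem_iUnion.mpr ⟨k, pos_iff_ne_zero.mpr h⟩)
  -- the balls
  set U : ℕ → Set M := fun n => ⋃ k ∈ Finset.range n, Metric.closedBall (x k) r with hU
  have hUmono : Monotone U := by
    intro a b hab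
    exact Set.biUnion_subset_biUnion_left (Finset.range_subset_range.mpr hab)
  have hUall : ⋃ n, U n = Set.univ := by
    refine Set.eq_univ_of_forall fun z => ?_
    obtain ⟨k, hk⟩ := hdense.exists_dist_lt z hr0
    refine Set.mem_iUnion.mpr ⟨k + 1, ?_⟩
    exact Set.mem_biUnion (Finset.mem_range.mpr (Nat.lt_succ_self k))
      (Metric.mem_closedBall.mpr hk.le)
  have hUtend : Filter.Tendsto (fun n => (μ (U n)).toReal) Filter.atTop (nhds 1) := by
    have h1 : Filter.Tendsto (fun n => μ (U n)) Filter.atTop (nhds (μ (⋃ n, U n))) :=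
      tendsto_measure_iUnion_atTop hUmono
    rw [hUall, measure_univ] at h1
    have := (ENNReal.tendsto_toReal (a := 1) ENNReal.one_ne_top).comp h1
    simpa [Function.comp_def] using this
  obtain ⟨n, hn⟩ : ∃ n, 1 - ε₁/2 < (μ (U n)).toReal :=
    (hUtend.eventually (eventually_gt_nhds (by linarith))).exists
  -- the shrunk cells
  set T : ℕ → ℝ → Set M := fun k η =>
    Metric.closedBall (x k) (r - η) ∩ ⋂ j ∈ Finset.range k, (Metric.ball (x j) (r + η))ᶜ with hT
  have hTmem : ∀ k η z, z ∈ T k η ↔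
      dist z (x k) ≤ r - η ∧ ∀ j < k, r + η ≤ dist z (x j) := by
    intro k η z
    simp only [hT, Set.mem_inter_iff, Metric.mem_closedBall, Set.mem_iInter,
      Finset.mem_range, Set.mem_compl_iff, Metric.mem_ball, not_lt]
  have hTanti : ∀ k, ∀ η η' : ℝ, η' ≤ η → T k η ⊆ T k η' := by
    intro k η η' hle z hz
    rw [hTmem] at hz ⊢
    exact ⟨by linarith [hz.1], fun j hj => by linarith [hz.2 j hj]⟩
  set W : ℕ → Set M := fun m => ⋃ k ∈ Finset.range n, T k (1/((m:ℝ)+1)) with hW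
  have hWmono : Monotone W := by
    intro a b hab
    refine Set.iUnion₂_mono fun k _ => hTanti k _ _ ?_
    have hcast : ((a:ℝ)+1) ≤ (b:ℝ)+1 := by
      have := (Nat.cast_le (α := ℝ)).mpr hab; linarith
    exact one_div_le_one_div_of_le (by positivity) hcast
  have key : ∀ c : ℝ, 0 < c → ∀ᶠ m : ℕ in Filter.atTop, 1/((m:ℝ)+1) < c := by
    intro c hc
    exact tendsto_one_div_add_atTop_nhds_zero_nat.eventually (gt_mem_nhds hc)
  -- U n is almost covered by ⋃ m, W m
  have hcov : U n ⊆ (⋃ m, W m) ∪ ⋃ k ∈ Finset.range n, {y | dist y (x k) = r} := by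
    intro z hz
    simp only [hU, Set.mem_iUnion, Finset.mem_range, Metric.mem_closedBall] at hz
    obtain ⟨k', hk'n, hk'd⟩ := hz
    have hex : ∃ k, k < n ∧ dist z (x k) ≤ r := ⟨k', hk'n, hk'd⟩
    classical
    let k₀ := Nat.find hex
    obtain ⟨hk₀n, hk₀d⟩ := Nat.find_spec hex
    rcases eq_or_lt_of_le hk₀d with heq | hlt
    · exact Or.inr (Set.mem_iUnion₂.mpr ⟨k₀, Finset.mem_range.mpr hk₀n, heq⟩)
    · left
      have hjgt : ∀ j < k₀, r < dist z (x j) := by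
        intro j hj
        have := Nat.find_min hex hj
        push_neg at this
        exact lt_of_not_ge (fun hle => absurd hle (not_le.mpr (this (hj.trans hk₀n))))
      have h1 : ∀ᶠ m : ℕ in Filter.atTop, dist z (x k₀) ≤ r - 1/((m:ℝ)+1) :=
        (key (r - dist z (x k₀)) (by linarith)).mono fun m hm => by linarith
      have h2 : ∀ᶠ m : ℕ in Filter.atTop, ∀ j ∈ Finset.range k₀,
          r + 1/((m:ℝ)+1) ≤ dist z (x j) := by
        rw [Filter.eventually_all_finset]
        intro j hj
        have := hjgt j (Finset.mem_range.mp hj)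
        exact (key (dist z (x j) - r) (by linarith)).mono fun m hm => by linarith
      obtain ⟨m, hm1, hm2⟩ := (h1.and h2).exists
      refine Set.mem_iUnion.mpr ⟨m, Set.mem_iUnion₂.mpr ⟨k₀, Finset.mem_range.mpr hk₀n, ?_⟩⟩
      rw [hTmem]
      exact ⟨hm1, fun j hj => hm2 j (Finset.mem_range.mpr hj)⟩
  have hnull : μ (⋃ k ∈ Finset.range n, {y | dist y (x k) = r}) = 0 :=
    (measure_biUnion_null_iff (Finset.range n).countable_toSet).mpr fun k _ => hsphere k
  have hUle : μ (U n) ≤ μ (⋃ m, W m) := by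
    calc μ (U n) ≤ μ ((⋃ m, W m) ∪ ⋃ k ∈ Finset.range n, {y | dist y (x k) = r}) :=
          measure_mono hcov
      _ ≤ μ (⋃ m, W m) + μ (⋃ k ∈ Finset.range n, {y | dist y (x k) = r}) := measure_union_le _ _
      _ = μ (⋃ m, W m) := by rw [hnull, add_zero]
  have hWtend : Filter.Tendsto (fun m => (μ (W m)).toReal) Filter.atTop
      (nhds (μ (⋃ m, W m)).toReal) :=
    (ENNReal.tendsto_toReal (measure_ne_top μ _)).comp (tendsto_measure_iUnion_atTop hWmono)
  have hlim : 1 - ε₁ < (μ (⋃ m, W m)).toReal := by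
    have h3 : (μ (U n)).toReal ≤ (μ (⋃ m, W m)).toReal :=
      ENNReal.toReal_le_toReal (measure_ne_top μ _) (measure_ne_top μ _) |>.mpr hUle
    linarith
  obtain ⟨m, hm⟩ : ∃ m, 1 - ε₁ < (μ (W m)).toReal :=
    (hWtend.eventually (eventually_gt_nhds hlim)).exists
  set η : ℝ := 1/((m:ℝ)+1) with hη
  have hη0 : 0 < η := by positivity
  refine ⟨η, hη0, n, fun i => T i η, ?_, ?_, ?_, ?_, ?_⟩
  · -- measurability
    intro i
    exact Metric.isClosed_closedBall.measurableSet.inter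
      (MeasurableSet.biInter (Finset.range (i:ℕ)).countable_toSet
        fun j _ => Metric.isOpen_ball.measurableSet.compl)
  · -- pairwise disjoint
    have hdis : ∀ i j : Fin n, (i:ℕ) < (j:ℕ) → Disjoint (T i η) (T j η) := by
      intro i j hij
      rw [Set.disjoint_left]
      intro z hzi hzj
      rw [hTmem] at hzi hzj
      have := hzj.2 i hij
      have := hzi.1
      linarith
    intro i j hij
    rcases lt_or_gt_of_ne (fun h => hij (Fin.ext h)) with h | h
    · exact hdis i j h
    · exact (hdis j i h).symm
  · -- measure
    have : ⋃ i : Fin n, T i η = W m := by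
      ext z
      simp only [hW, Set.mem_iUnion, Finset.mem_range]
      constructor
      · rintro ⟨i, hi⟩; exact ⟨i, i.isLt, hi⟩
      · rintro ⟨k, hk, hz⟩; exact ⟨⟨k, hk⟩, hz⟩
    rw [this]
    exact hm
  · -- small diameter
    intro i a ha b hb
    rw [hTmem] at ha hb
    have := dist_triangle_right a b (x i)
    have h1 := ha.1
    have h2 := hb.1
    linarith
  · -- separation
    intro i j hij a ha b hb
    rw [hTmem] at ha hb
    rcases lt_or_gt_of_ne (fun h => hij (Fin.ext h)) with h | h
    · have h1 := hb.2 i h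
      have h2 := ha.1
      have := dist_triangle b a (x i)
      rw [dist_comm a b]
      linarith
    · have h1 := ha.2 j h
      have h2 := hb.1
      have := dist_triangle a b (x j)
      linarith
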